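/- Let T > 0 and 0 < t₀ ≤ T, let rˡ, rᵇ : [0,T] → ℝ be measurable, Lebesgue-integrable functions with rˡ(u) < rᵇ(u) for every u ∈ [0,T], and set Bˡ_t := exp(∫₀ᵗ rˡ(u)du), Bᵇ_t := exp(∫₀ᵗ rᵇ(u)du). Let x₁ > 0 > x₂ and let α satisfy 0 < α ≤ min{ x₁·Bˡ_{t₀}, −x₂·Bᵇ_{t₀} }. Then: (i) x := x₁ − α·(Bˡ_{t₀})⁻¹ ≥ 0 and (x₁ − α·(Bˡ_{t₀})⁻¹)·Bˡ_T + α·exp(∫_{t₀}^{T} rˡ(u)du) = x₁·Bˡ_T; (ii) x̃ := x₂ + α·(Bᵇ_{t₀})⁻¹ ≤ 0 and (x₂ + α·(Bᵇ_{t₀})⁻¹)·Bᵇ_T − α·exp(∫_{t₀}^{T} rᵇ(u)du) = x₂·Bᵇ_T; (iii) −α·(Bˡ_{t₀})⁻¹ < −α·(Bᵇ_{t₀})⁻¹. -/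
import Mathlib


open MeasureTheory Set

/-- Remark `remark for increasing contract`: replication computations showing
`Pʰ₀(x₁,A,C) = −α(Bˡ_{t₀})⁻¹ < −α(Bᵇ_{t₀})⁻¹ = Pᶜ₀(x₂,−A,−C)`. -/
theorem stmt_17 (T t₀ : ℝ) (hT : 0 < T) (ht₀ : 0 < t₀) (ht₀T : t₀ ≤ T)
    (rl rb : ℝ → ℝ) (hm1 : Measurable rl) (hm2 : Measurable rb)
    (hi1 : IntegrableOn rl (Icc (0 : ℝ) T))
    (hi2 : IntegrableOn rb (Icc (0 : ℝ) T))
    (hlt : ∀ u ∈ Icc (0 : ℝ) T, rl u < rb u)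
    (Bl Bb : ℝ → ℝ)
    (hBl : ∀ t, Bl t = Real.exp (∫ u in (0 : ℝ)..t, rl u))
    (hBb : ∀ t, Bb t = Real.exp (∫ u in (0 : ℝ)..t, rb u))
    (x₁ x₂ α : ℝ) (hx₁ : 0 < x₁) (hx₂ : x₂ < 0)
    (hα : 0 < α) (hα2 : α ≤ min (x₁ * Bl t₀) (-x₂ * Bb t₀)) :
    (0 ≤ x₁ - α * (Bl t₀)⁻¹ ∧
      (x₁ - α * (Bl t₀)⁻¹) * Bl T + α * Real.exp (∫ u in t₀..T, rl u) = x₁ * Bl T) ∧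
    (x₂ + α * (Bb t₀)⁻¹ ≤ 0 ∧
      (x₂ + α * (Bb t₀)⁻¹) * Bb T - α * Real.exp (∫ u in t₀..T, rb u) = x₂ * Bb T) ∧
    -(α * (Bl t₀)⁻¹) < -(α * (Bb t₀)⁻¹) := by
  have h0T : (0 : ℝ) ≤ T := le_of_lt hT
  have hIl : IntervalIntegrable rl volume 0 T := by
    rw [intervalIntegrable_iff_integrableOn_Ioc_of_le h0T]
    exact hi1.mono_set Ioc_subset_Icc_self
  have hIb : IntervalIntegrable rb volume 0 T := by
    rw [intervalIntegrable_iff_integrableOn_Ioc_of_le h0T]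
    exact hi2.mono_set Ioc_subset_Icc_self
  have hIl1 : IntervalIntegrable rl volume 0 t₀ :=
    hIl.mono_set (by rw [uIcc_of_le ht₀.le, uIcc_of_le h0T]; exact Icc_subset_Icc le_rfl ht₀T)
  have hIl2 : IntervalIntegrable rl volume t₀ T :=
    hIl.mono_set (by rw [uIcc_of_le ht₀T, uIcc_of_le h0T]; exact Icc_subset_Icc ht₀.le le_rfl)
  have hIb1 : IntervalIntegrable rb volume 0 t₀ :=
    hIb.mono_set (by rw [uIcc_of_le ht₀.le, uIcc_of_le h0T]; exact Icc_subset_Icc le_rfl ht₀T)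
  have hIb2 : IntervalIntegrable rb volume t₀ T :=
    hIb.mono_set (by rw [uIcc_of_le ht₀T, uIcc_of_le h0T]; exact Icc_subset_Icc ht₀.le le_rfl)
  have hsplitl : (∫ u in (0:ℝ)..t₀, rl u) + (∫ u in t₀..T, rl u) = ∫ u in (0:ℝ)..T, rl u :=
    intervalIntegral.integral_add_adjacent_intervals hIl1 hIl2
  have hsplitb : (∫ u in (0:ℝ)..t₀, rb u) + (∫ u in t₀..T, rb u) = ∫ u in (0:ℝ)..T, rb u :=
    intervalIntegral.integral_add_adjacent_intervals hIb1 hIb2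
  have hBlpos : 0 < Bl t₀ := by rw [hBl]; exact Real.exp_pos _
  have hBbpos : 0 < Bb t₀ := by rw [hBb]; exact Real.exp_pos _
  have hBlT : Bl T = Bl t₀ * Real.exp (∫ u in t₀..T, rl u) := by
    rw [hBl, hBl, ← Real.exp_add, hsplitl]
  have hBbT : Bb T = Bb t₀ * Real.exp (∫ u in t₀..T, rb u) := by
    rw [hBb, hBb, ← Real.exp_add, hsplitb]
  refine ⟨⟨?_, ?_⟩, ⟨?_, ?_⟩, ?_⟩
  · have h1 : α ≤ x₁ * Bl t₀ := le_trans hα2 (min_le_left _ _)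
    have : α * (Bl t₀)⁻¹ ≤ x₁ := by
      rw [← div_eq_mul_inv, div_le_iff₀ hBlpos]; linarith
    linarith
  · rw [hBlT]; field_simp; ring
  · have h2 : α ≤ -x₂ * Bb t₀ := le_trans hα2 (min_le_right _ _)
    have : α * (Bb t₀)⁻¹ ≤ -x₂ := by
      rw [← div_eq_mul_inv, div_le_iff₀ hBbpos]; linarith
    linarith
  · rw [hBbT]; field_simp; ring
  · have hint : (∫ u in (0:ℝ)..t₀, rl u) < ∫ u in (0:ℝ)..t₀, rb u := by
      rw [intervalIntegral.integral_of_le ht₀.le, intervalIntegral.integral_of_le ht₀.le]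
      have hIl1' : IntegrableOn rl (Ioc (0:ℝ) t₀) :=
        (intervalIntegrable_iff_integrableOn_Ioc_of_le ht₀.le).mp hIl1
      have hIb1' : IntegrableOn rb (Ioc (0:ℝ) t₀) :=
        (intervalIntegrable_iff_integrableOn_Ioc_of_le ht₀.le).mp hIb1
      have hsub : Ioc (0:ℝ) t₀ ⊆ Icc (0:ℝ) T :=
        (Ioc_subset_Icc_self).trans (Icc_subset_Icc le_rfl ht₀T)
      have hpos : 0 < ∫ u in Ioc (0:ℝ) t₀, (rb u - rl u) := by
        rw [MeasureTheory.setIntegral_pos_iff_support_of_nonneg_ae]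
        · have : Ioc (0:ℝ) t₀ ⊆ Function.support (fun u => rb u - rl u) ∩ Ioc 0 t₀ := by
            intro u hu
            exact ⟨by simpa [Function.mem_support] using (sub_pos.mpr (hlt u (hsub hu))).ne',
              hu⟩
          calc (0:ENNReal) < volume (Ioc (0:ℝ) t₀) := by
                simp [Real.volume_Ioc, ht₀]
            _ ≤ volume (Function.support (fun u => rb u - rl u) ∩ Ioc 0 t₀) :=
                measure_mono this
        · filter_upwards [ae_restrict_mem measurableSet_Ioc] with u hu
          exact sub_nonneg.mpr (hlt u (hsub hu)).le
        · exact hIb1'.sub hIl1'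
      rw [MeasureTheory.integral_sub hIb1' hIl1'] at hpos
      linarith
    have hBlt : Bl t₀ < Bb t₀ := by
      rw [hBl, hBb]; exact Real.exp_lt_exp.mpr hint
    have : (Bb t₀)⁻¹ < (Bl t₀)⁻¹ := by
      exact inv_strictAnti₀ hBlpos hBlt
    nlinarith
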